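/- arXiv:2011.00166 — 6 statements merged into one kernel-verified Lean document; each statement's English description precedes it below -/
import Mathlib

section
/- Let X be a group, and let x, y ∈ X satisfy x⁻¹yx = y⁻¹. Then for every i ≥ 0, the element y^(2^i) lies in the (i+1)-st term of the lower central series of X. -/
open scoped commutatorElement

/-- If `x⁻¹ y x = y⁻¹` in a group `X`, then `y ^ (2 ^ i)` lies in the `(i+1)`-st term
of the lower central series of `X` (here `lowerCentralSeries X i` is γ_{i+1}). -/
theorem stmt_0 {X : Type*} [Group X] (x y : X) (h : x⁻¹ * y * x = y⁻¹) :
    ∀ i : ℕ, y ^ (2 ^ i) ∈ (⊤ : Subgroup X).lowerCentralSeries i := by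
  intro i
  induction i with
  | zero => simp [Subgroup.lowerCentralSeries_zero]
  | succ i ih =>
      have hc : x⁻¹ * y ^ (2 ^ i) * x = (y ^ (2 ^ i))⁻¹ := by
        have := map_pow (MulAut.conj x⁻¹) y (2 ^ i)
        simpa [MulAut.conj_apply, h, inv_pow] using this
      have key : y ^ (2 ^ (i + 1)) = ⁅y ^ (2 ^ i), x⁻¹⁆ := by
        have : y ^ (2 ^ (i+1)) = y ^ (2 ^ i) * y ^ (2 ^ i) := by
          rw [← pow_add]; ring_nf
        rw [this, commutatorElement_def]
        have h2 : x⁻¹ * (y ^ (2 ^ i))⁻¹ * x = y ^ (2 ^ i) := by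
          rw [show x⁻¹ * (y ^ (2 ^ i))⁻¹ * x = (x⁻¹ * y ^ (2 ^ i) * x)⁻¹ by group, hc,
            inv_inv]
        calc y ^ (2 ^ i) * y ^ (2 ^ i)
            = y ^ (2 ^ i) * (x⁻¹ * (y ^ (2 ^ i))⁻¹ * x) := by rw [h2]
          _ = y ^ (2 ^ i) * x⁻¹ * (y ^ (2 ^ i))⁻¹ * x⁻¹⁻¹ := by group
      rw [key, Subgroup.lowerCentralSeries_succ]
      exact Subgroup.commutator_mem_commutator ih (Subgroup.mem_top _)
end

section
/- Let X be a nilpotent group, and let x, y ∈ X satisfy x⁻¹yx = y⁻¹. If y has finite odd order, then y = 1. -/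
theorem stmt_2_aux (G : Type*) [Group G] [Group.IsNilpotent G] :
    ∀ x y : G, x⁻¹ * y * x = y⁻¹ → IsOfFinOrder y → Odd (orderOf y) → y = 1 := by
  refine nilpotent_center_quotient_ind
    (P := fun G _ _ => ∀ x y : G, x⁻¹ * y * x = y⁻¹ → IsOfFinOrder y → Odd (orderOf y) → y = 1)
    G ?_ ?_
  · intro G _ _ x y _ _ _; exact Subsingleton.elim _ _
  · intro G _ _ ih x y h hfin hodd
    have hyc : y ∈ Subgroup.center G := by
      rw [← QuotientGroup.eq_one_iff]
      refine ih ((x : G ⧸ Subgroup.center G)) _ ?_ ?_ ?_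
      · rw [← QuotientGroup.mk_inv, ← QuotientGroup.mk_mul, ← QuotientGroup.mk_mul, h,
          QuotientGroup.mk_inv]
      · exact (QuotientGroup.mk' _).isOfFinOrder hfin
      · have hdvd : orderOf ((y : G ⧸ Subgroup.center G)) ∣ orderOf y :=
          orderOf_map_dvd (QuotientGroup.mk' _) y
        rw [Nat.odd_iff] at hodd ⊢
        rcases Nat.mod_two_eq_zero_or_one (orderOf ((y : G ⧸ Subgroup.center G))) with he | ho
        · exfalso
          have h2d : (2 : ℕ) ∣ orderOf y := dvd_trans (Nat.dvd_of_mod_eq_zero he) hdvd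
          omega
        · exact ho
    have hy2 : y * y = 1 := by
      have h2 := h
      rw [Subgroup.mem_center_iff] at hyc
      rw [mul_assoc, ← hyc x, ← mul_assoc, inv_mul_cancel, one_mul] at h2
      rw [mul_eq_one_iff_eq_inv]; exact h2
    have hord : orderOf y ∣ 2 := orderOf_dvd_of_pow_eq_one (by rw [pow_two]; exact hy2)
    rw [Nat.odd_iff] at hodd
    have hle := Nat.le_of_dvd (by norm_num) hord
    have hpos := hfin.orderOf_pos
    have h1 : orderOf y = 1 := by omega
    exact orderOf_eq_one_iff.mp h1

/-- In a nilpotent group, an element of finite odd order that is inverted by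
conjugation is trivial. -/
theorem stmt_2 {X : Type*} [Group X] [Group.IsNilpotent X] (x y : X)
    (h : x⁻¹ * y * x = y⁻¹) (hfin : IsOfFinOrder y) (hodd : Odd (orderOf y)) :
    y = 1 :=
  stmt_2_aux X x y h hfin hodd
end

section
/- Let C be a class of groups containing a nontrivial group and closed under taking subgroups, extensions, and Cartesian (unrestricted direct) powers ∏_{y ∈ Y} X indexed by any Y ∈ C for any X ∈ C. If every group in C is periodic, then every group in C has finite exponent. -/
/-- If `C` is a root class (contains a nontrivial group; closed under subgroups,
extensions, and Cartesian powers `Y → X` for `X, Y ∈ C`) all of whose groups are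
periodic, then every group in `C` has finite exponent. -/
theorem stmt_4 (C : (G : Type) → [inst : Group G] → Prop)
    (hnontriv : ∃ (G : Type) (_ : Group G), C G ∧ Nontrivial G)
    (hsub : ∀ (G : Type) [Group G], C G → ∀ H : Subgroup G, C H)
    (hext : ∀ (G : Type) [Group G] (N : Subgroup G) [N.Normal],
      C N → C (G ⧸ N) → C G)
    (hpow : ∀ (X Y : Type) [Group X] [Group Y], C X → C Y → C (Y → X))
    (hper : ∀ (G : Type) [Group G], C G → ∀ g : G, IsOfFinOrder g)
    (G : Type) [Group G] (hG : C G) :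
    ∃ n : ℕ, 0 < n ∧ ∀ g : G, g ^ n = 1 := by
  have hP : C (G → G) := hpow G G hG hG
  have hid := hper (G → G) hP (fun g => g)
  obtain ⟨n, hn, hpow'⟩ := (isOfFinOrder_iff_pow_eq_one).mp hid
  exact ⟨n, hn, fun g => congrFun hpow' g⟩
end

section
/- Let P(m,n) = ⟨x, y | xᵐ = yⁿ⟩ with |m| > 1 and |n| > 1, and let C be a class of groups consisting only of periodic groups, with ρ(C) the set of primes dividing orders of elements of groups in C. If P(m,n) is residually a C-group, then both m and n are ρ(C)-numbers. -/
/-- The defining relation of `P(m,n) = ⟨x, y | xᵐ = yⁿ⟩`, with `x` encoded as `true`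
and `y` as `false`. -/
def pRel (m n : ℤ) : Set (FreeGroup Bool) :=
  {FreeGroup.of true ^ m * (FreeGroup.of false ^ n)⁻¹}

/-- The set `ρ(C)` of primes dividing the order of some element of some group in the
class `C`. -/
def rhoSet (C : (G : Type) → [inst : Group G] → Prop) : Set ℕ :=
  {p | ∃ (X : Type) (_ : Group X), C X ∧ ∃ x : X, p ∣ orderOf x ∧ IsOfFinOrder x}

open Monoid Monoid.PushoutI

lemma zph (c : ℤ) (x : Multiplicative ℤ) :
    zpowGroupHom (α := Multiplicative ℤ) c x = Multiplicative.ofAdd (c * x.toAdd) := by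
  apply Multiplicative.toAdd.injective
  simp [zpowGroupHom, smul_eq_mul, mul_comm]

lemma mem_range_zph (c a : ℤ) :
    Multiplicative.ofAdd a ∈ (zpowGroupHom (α := Multiplicative ℤ) c).range ↔ c ∣ a := by
  constructor
  · rintro ⟨h, hh⟩
    rw [zph] at hh
    exact ⟨h.toAdd, (Multiplicative.ofAdd.injective hh).symm⟩
  · rintro ⟨b, rfl⟩
    exact ⟨Multiplicative.ofAdd b, by rw [zph]; rfl⟩

lemma inj_zph (c : ℤ) (hc : c ≠ 0) :
    Function.Injective (zpowGroupHom (α := Multiplicative ℤ) c) := by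
  intro x y h
  rw [zph, zph] at h
  exact Multiplicative.toAdd.injective (mul_left_cancel₀ hc (Multiplicative.ofAdd.injective h))

/-- The maps in the pushout diagram for `P(m,n)`. -/
abbrev phiMN (m n : ℤ) : Bool → (Multiplicative ℤ →* Multiplicative ℤ) :=
  fun b => zpowGroupHom (if b then m else n)

/-- Nontriviality of reduced words of length 4 in the amalgamated product, via the
normal form theorem (`Reduced.eq_empty_of_mem_range`). -/
lemma pushout_ne_one (m n : ℤ) (hm0 : m ≠ 0) (hn0 : n ≠ 0) (i : Bool) (k l : ℤ)
    (hk : ¬ (if i then m else n) ∣ k) (hl : ¬ (if !i then m else n) ∣ l) :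
    PushoutI.of (φ := phiMN m n) i (.ofAdd k) * PushoutI.of (!i) (.ofAdd l) *
      PushoutI.of i (.ofAdd (-k)) * PushoutI.of (!i) (.ofAdd (-l)) ≠ 1 := by
  have hk0 : k ≠ 0 := fun h => hk (h ▸ dvd_zero _)
  have hl0 : l ≠ 0 := fun h => hl (h ▸ dvd_zero _)
  have hφ : ∀ b, Function.Injective (phiMN m n b) := by
    intro b
    cases b <;> simp only [phiMN, if_true, if_false, Bool.false_eq_true]
    · exact inj_zph n hn0
    · exact inj_zph m hm0
  have hii : i ≠ !i := by cases i <;> simp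
  let w : CoprodI.Word (fun _ : Bool => Multiplicative ℤ) :=
    { toList := [⟨i, .ofAdd k⟩, ⟨!i, .ofAdd l⟩, ⟨i, .ofAdd (-k)⟩, ⟨!i, .ofAdd (-l)⟩]
      ne_one := by
        intro x hx
        simp only [List.mem_cons, List.mem_singleton, List.not_mem_nil, or_false] at hx
        rcases hx with rfl|rfl|rfl|rfl <;>
          simp_all [← ofAdd_zero, ← ofAdd_neg, neg_eq_zero]
      chain_ne := by
        refine List.IsChain.cons_cons hii (List.IsChain.cons_cons (Ne.symm hii) (List.IsChain.cons_cons hii ?_))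
        exact List.isChain_singleton _ }
  have hred : PushoutI.Reduced (phiMN m n) w := by
    intro g hg
    simp only [w, List.mem_cons, List.mem_singleton, List.not_mem_nil, or_false] at hg
    rcases hg with rfl|rfl|rfl|rfl <;>
      simp only [phiMN] <;> rw [mem_range_zph] <;>
      first
        | exact hk
        | exact hl
        | exact fun h => hk ((dvd_neg).mp h)
        | exact fun h => hl ((dvd_neg).mp h)
  intro h
  have h1 : ofCoprodI (φ := phiMN m n) w.prod =
      PushoutI.of (φ := phiMN m n) i (.ofAdd k) * PushoutI.of (!i) (.ofAdd l) *
        PushoutI.of i (.ofAdd (-k)) * PushoutI.of (!i) (.ofAdd (-l)) := by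
    simp [w, CoprodI.Word.prod, map_mul, ofCoprodI_of, mul_assoc]
  have hmem : ofCoprodI (φ := phiMN m n) w.prod ∈ (PushoutI.base (phiMN m n)).range := by
    rw [h1, h]; exact ⟨1, map_one _⟩
  have hempty := hred.eq_empty_of_mem_range hφ hmem
  have := congrArg CoprodI.Word.toList hempty
  simp [w, CoprodI.Word.empty] at this

lemma ofAdd_one_zpow (c : ℤ) :
    (Multiplicative.ofAdd (1 : ℤ)) ^ c = Multiplicative.ofAdd c := by
  apply Multiplicative.toAdd.injective
  simp

lemma not_dvd_one_of_abs {c : ℤ} (hc : 1 < |c|) : ¬ c ∣ (1 : ℤ) := fun h =>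
  absurd (Int.le_of_dvd one_pos ((abs_dvd c 1).2 h)) (by omega)

/-- The canonical map from `P(m,n)` to the pushout. -/
noncomputable def pgHom (m n : ℤ) : PresentedGroup (pRel m n) →* PushoutI (phiMN m n) :=
  PresentedGroup.toGroup (f := fun b => PushoutI.of (φ := phiMN m n) b (.ofAdd 1)) <| by
    rintro r hr
    rw [Set.mem_singleton_iff.mp hr]
    have h1 : (PushoutI.of (φ := phiMN m n) true (.ofAdd 1)) ^ m
        = PushoutI.base (phiMN m n) (.ofAdd 1) := by
      rw [← map_zpow, ofAdd_one_zpow, ← of_apply_eq_base (φ := phiMN m n) true]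
      congr 1
      rw [zph]; simp
    have h2 : (PushoutI.of (φ := phiMN m n) false (.ofAdd 1)) ^ n
        = PushoutI.base (phiMN m n) (.ofAdd 1) := by
      rw [← map_zpow, ofAdd_one_zpow, ← of_apply_eq_base (φ := phiMN m n) false]
      congr 1
      rw [zph]; simp
    simp only [map_mul, map_inv, map_zpow, FreeGroup.lift_apply_of]
    rw [h1, h2, mul_inv_cancel]

/-- The commutator `[xᵏ, y]` (or `[yᵏ, x]`) is nontrivial in `P(m,n)` whenever
`m ∤ k` (resp. `n ∤ k`). -/
lemma pg_comm_ne_one (m n : ℤ) (hm : 1 < |m|) (hn : 1 < |n|) (i : Bool) (k : ℤ)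
    (hk : ¬ (if i then m else n) ∣ k) :
    (PresentedGroup.of (rels := pRel m n) i) ^ k * PresentedGroup.of (!i) *
      ((PresentedGroup.of (rels := pRel m n) i) ^ k)⁻¹ *
      (PresentedGroup.of (rels := pRel m n) (!i))⁻¹ ≠ 1 := by
  have hm0 : m ≠ 0 := by rintro rfl; simp at hm
  have hn0 : n ≠ 0 := by rintro rfl; simp at hn
  intro h
  apply pushout_ne_one m n hm0 hn0 i k 1 hk
    (by cases i <;> simpa using not_dvd_one_of_abs ‹_›)
  have := congrArg (pgHom m n) h
  simp only [map_mul, map_inv, map_zpow, map_one, pgHom, PresentedGroup.toGroup.of] at this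
  rw [← map_zpow, ofAdd_one_zpow] at this
  rw [ofAdd_neg, ofAdd_neg, map_inv, map_inv]
  exact this

lemma pg_relation (m n : ℤ) :
    (PresentedGroup.of (rels := pRel m n) true) ^ m
      = (PresentedGroup.of (rels := pRel m n) false) ^ n := by
  have h : (QuotientGroup.mk (FreeGroup.of true ^ m * (FreeGroup.of false ^ n)⁻¹)
      : PresentedGroup (pRel m n)) = 1 := by
    rw [QuotientGroup.eq_one_iff]
    exact Subgroup.subset_normalClosure rfl
  have h2 : ((QuotientGroup.mk' (Subgroup.normalClosure (pRel m n)))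
      (FreeGroup.of true ^ m * (FreeGroup.of false ^ n)⁻¹)) = 1 := h
  rw [map_mul, map_inv, map_zpow, map_zpow, mul_inv_eq_one] at h2
  exact h2

/-- The key "killing" lemma: in a periodic group in which the order of `u` is coprime
to `q`, the commutator `[u^(m/q), v]` is trivial whenever `u^m = v^n`. -/
lemma kill {P : Type} [Group P] (m n k : ℤ) (q : ℕ) (hq : q.Prime)
    (u v : P) (huv : u ^ m = v ^ n) (hu : IsOfFinOrder u)
    (hqd : ¬ q ∣ orderOf u) (hqk : (q : ℤ) * k = m) :
    u ^ k * v * (u ^ k)⁻¹ * v⁻¹ = 1 := by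
  have hcop : Nat.Coprime q (orderOf u) := (hq.coprime_iff_not_dvd).2 hqd
  have hcopZ : IsCoprime (q : ℤ) (orderOf u : ℤ) := Int.isCoprime_iff_gcd_eq_one.2 (by
    rw [Int.gcd_natCast_natCast]; exact hcop)
  obtain ⟨s, t, hst⟩ := hcopZ
  have hord : u ^ (orderOf u : ℤ) = 1 := by
    rw [zpow_natCast]; exact pow_orderOf_eq_one u
  have huk : u ^ k = v ^ (n * s) := by
    calc u ^ k = u ^ (k * (s * q + t * (orderOf u : ℤ))) := by rw [hst, mul_one]
    _ = u ^ (m * s) * (u ^ (orderOf u : ℤ)) ^ (k * t) := by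
        rw [← zpow_mul, ← zpow_add, ← hqk]; ring_nf
    _ = (u ^ m) ^ s := by rw [hord, one_zpow, mul_one, zpow_mul]
    _ = v ^ (n * s) := by rw [huv, ← zpow_mul]
  rw [huk]
  group

lemma main_case (m n : ℤ) (hm : 1 < |m|) (hn : 1 < |n|)
    (C : (G : Type) → [inst : Group G] → Prop)
    (hper : ∀ (G : Type) [Group G], C G → ∀ g : G, IsOfFinOrder g)
    (hres : ∀ g : PresentedGroup (pRel m n), g ≠ 1 →
      ∃ (P : Type) (_ : Group P) (σ : PresentedGroup (pRel m n) →* P),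
        C P ∧ Function.Surjective σ ∧ σ g ≠ 1)
    (q : ℕ) (hq : q.Prime) (i : Bool) (hdvd : (q : ℤ) ∣ (if i then m else n)) :
    q ∈ rhoSet C := by
  set M : ℤ := if i then m else n with hM
  set N : ℤ := if i then n else m with hN
  have hM1 : 1 < |M| := by cases i <;> simpa [hM]
  have hM0 : M ≠ 0 := by rintro h; rw [h] at hM1; simp at hM1
  set k : ℤ := M / q with hkdef
  have hqk : (q : ℤ) * k = M := Int.mul_ediv_cancel' hdvd
  have hk0 : k ≠ 0 := by rintro h; rw [h, mul_zero] at hqk; exact hM0 hqk.symm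
  have hk : ¬ M ∣ k := by
    rintro ⟨c, hc⟩
    have h1 : k * ((q : ℤ) * c) = k * 1 := by
      rw [mul_one]; conv_rhs => rw [hc, ← hqk]
      ring
    have h2 : (q : ℤ) * c = 1 := mul_left_cancel₀ hk0 h1
    have h3 : (q : ℤ) ∣ 1 := ⟨c, h2.symm⟩
    have := Int.le_of_dvd one_pos h3
    have := hq.one_lt
    omega
  have hgne := pg_comm_ne_one m n hm hn i k (hM ▸ hk)
  obtain ⟨P, _, σ, hCP, hsurj, hg⟩ := hres _ hgne
  by_contra hqrho
  set u := σ (PresentedGroup.of i) with hu'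
  set v := σ (PresentedGroup.of (!i)) with hv'
  have huv : u ^ M = v ^ N := by
    have := congrArg σ (pg_relation m n)
    rw [map_zpow, map_zpow] at this
    cases i
    · exact this.symm
    · exact this
  have hu : IsOfFinOrder u := hper P hCP u
  have hqd : ¬ q ∣ orderOf u := fun hd => hqrho ⟨P, inferInstance, hCP, u, hd, hu⟩
  have hkill := kill M N k q hq u v huv hu hqd hqk
  apply hg
  simp only [map_mul, map_inv, map_zpow, ← hu', ← hv']
  exact hkill

/-- If `|m|, |n| > 1`, `C` is a class of periodic groups, and
`P(m,n) = ⟨x, y | xᵐ = yⁿ⟩` is residually a `C`-group, then every prime dividing `m`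
or `n` lies in `ρ(C)`, i.e. `m` and `n` are `ρ(C)`-numbers. -/
theorem stmt_9 (m n : ℤ) (hm : 1 < |m|) (hn : 1 < |n|)
    (C : (G : Type) → [inst : Group G] → Prop)
    (hper : ∀ (G : Type) [Group G], C G → ∀ g : G, IsOfFinOrder g)
    (hres : ∀ g : PresentedGroup (pRel m n), g ≠ 1 →
      ∃ (P : Type) (_ : Group P) (σ : PresentedGroup (pRel m n) →* P),
        C P ∧ Function.Surjective σ ∧ σ g ≠ 1)
    (q : ℕ) (hq : q.Prime) (hdvd : (q : ℤ) ∣ m ∨ (q : ℤ) ∣ n) :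
    q ∈ rhoSet C := by
  rcases hdvd with h | h
  · exact main_case m n hm hn C hper hres q hq true (by simpa)
  · exact main_case m n hm hn C hper hres q hq false (by simpa)
end

section
/- Every free group is residually torsion-free nilpotent. -/
open scoped Classical

namespace Magnus

variable {α : Type}

abbrev V (α : Type) : Type := List α → ℤ

abbrev E (α : Type) : Type := Module.End ℤ (V α)

noncomputable def xop (n : ℕ) (a : α) : E α where
  toFun f := fun l => if l.length ≤ n ∧ l.head? = some a then f l.tail else 0
  map_add' f g := by funext l; by_cases h : l.length ≤ n ∧ l.head? = some a <;>
    simp [h]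
  map_smul' c f := by funext l; by_cases h : l.length ≤ n ∧ l.head? = some a <;>
    simp [h]

lemma xop_apply (n : ℕ) (a : α) (f : V α) (l : List α) :
    xop n a f l = if l.length ≤ n ∧ l.head? = some a then f l.tail else 0 := rfl

noncomputable def X (n : ℕ) (u : List α) : E α := (u.map (xop n)).prod

lemma X_nil (n : ℕ) : X n ([] : List α) = 1 := rfl

lemma X_cons (n : ℕ) (a : α) (u : List α) : X n (a :: u) = xop n a * X n u := by
  simp [X]

lemma X_apply (n : ℕ) (u : List α) (f : V α) (l : List α) (hl : l.length ≤ n) :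
    X n u f l = if l.take u.length = u then f (l.drop u.length) else 0 := by
  induction u generalizing l with
  | nil => simp [X_nil]
  | cons a u ih =>
    rw [X_cons]
    have : (xop n a * X n u) f l = xop n a (X n u f) l := rfl
    rw [this, xop_apply]
    cases l with
    | nil =>
      simp only [List.head?_nil]
      simp
    | cons b t =>
      by_cases hba : b = a
      · subst hba
        have hcond : (b :: t).length ≤ n ∧ (b :: t).head? = some b := ⟨hl, rfl⟩
        have ht : t.length ≤ n := by simp at hl; omega
        rw [if_pos hcond, List.tail_cons, ih t ht]
        simp [List.take_succ_cons, List.drop_succ_cons]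
      · have : ¬ ((b :: t).length ≤ n ∧ (b :: t).head? = some a) := by
          simp [hba]
        rw [if_neg this]
        have : ¬ ((b :: t).take (a :: u).length = a :: u) := by
          simp [List.take_succ_cons]
          intro h; exact absurd h hba
        rw [if_neg this]

lemma X_apply_long (n : ℕ) (u : List α) (f : V α) (l : List α) (hl : n < l.length)
    (hu : u ≠ []) : X n u f l = 0 := by
  obtain ⟨a, u, rfl⟩ := List.exists_cons_of_ne_nil hu
  rw [X_cons]
  have : (xop n a * X n u) f l = xop n a (X n u f) l := rfl
  rw [this, xop_apply, if_neg]
  rintro ⟨h, -⟩; omega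

lemma X_eq_zero (n : ℕ) (u : List α) (hu : n + 1 ≤ u.length) : X n u = 0 := by
  ext f l
  show X n u f l = 0
  rcases le_or_gt l.length n with hl | hl
  · rw [X_apply n u f l hl, if_neg]
    intro h
    have := congrArg List.length h
    simp [List.length_take] at this
    omega
  · exact X_apply_long n u f l hl (by rintro rfl; simp at hu)

/-! ### Filtration submodules -/

noncomputable def P (n k : ℕ) : Submodule ℤ (E α) :=
  Submodule.span ℤ { p | ∃ u : List α, k ≤ u.length ∧ u.length ≤ n ∧ p = X n u }

noncomputable def Q (n s : ℕ) : Submodule ℤ (E α) :=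
  Submodule.span ℤ { p | ∃ u : List α, u.length = s ∧ p = X n u }

lemma P_mono (n : ℕ) {j k : ℕ} (h : j ≤ k) : P n k ≤ (P n j : Submodule ℤ (E α)) :=
  Submodule.span_mono (fun p ⟨u, h1, h2, h3⟩ => ⟨u, le_trans h h1, h2, h3⟩)

lemma P_top_eq_bot (n : ℕ) : (P n (n + 1) : Submodule ℤ (E α)) = ⊥ := by
  rw [P, eq_bot_iff, ← Submodule.span_empty (R := ℤ)]
  apply Submodule.span_mono
  rintro p ⟨u, h1, h2, -⟩
  omega

lemma X_mem_P (n k : ℕ) (u : List α) (h1 : k ≤ u.length) (h2 : u.length ≤ n) :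
    X n u ∈ P n k :=
  Submodule.subset_span ⟨u, h1, h2, rfl⟩

lemma P_mul (n : ℕ) {i j : ℕ} {p q : E α} (hp : p ∈ P n i) (hq : q ∈ P n j) :
    p * q ∈ P n (min (i + j) (n + 1)) := by
  induction hp using Submodule.span_induction with
  | mem p hp =>
    induction hq using Submodule.span_induction with
    | mem q hq =>
      obtain ⟨u, hu1, hu2, rfl⟩ := hp
      obtain ⟨v, hv1, hv2, rfl⟩ := hq
      have hXX : X n u * X n v = X n (u ++ v) := by
        simp [X, List.map_append, List.prod_append]
      rw [hXX]
      rcases le_or_gt (u.length + v.length) n with h | h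
      · apply P_mono n (min_le_left _ _)
        exact X_mem_P n _ _ (by simp; omega) (by simp; omega)
      · rw [X_eq_zero n _ (by simp; omega)]
        exact Submodule.zero_mem _
    | zero => rw [mul_zero]; exact Submodule.zero_mem _
    | add a b _ _ ha hb => rw [mul_add]; exact Submodule.add_mem _ ha hb
    | smul c a _ ha => rw [mul_smul_comm]; exact Submodule.smul_mem _ _ ha
  | zero => rw [zero_mul]; exact Submodule.zero_mem _
  | add a b _ _ ha hb => rw [add_mul]; exact Submodule.add_mem _ ha hb
  | smul c a _ ha => rw [smul_mul_assoc]; exact Submodule.smul_mem _ _ ha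

/-- The "coefficient extraction" vector: delta at the empty word. -/
noncomputable def dl : V α := fun l => if l = [] then 1 else 0

lemma P_apply_short {n k : ℕ} {p : E α} (hp : p ∈ P n k) (v : List α)
    (hv : v.length < k) (hk : k ≤ n + 1) : p dl v = 0 := by
  induction hp using Submodule.span_induction with
  | mem p hp =>
    obtain ⟨u, hu1, hu2, rfl⟩ := hp
    rw [X_apply n u dl v (by omega), if_neg, ]
    intro h
    have := congrArg List.length h
    simp [List.length_take] at this
    omega
  | zero => simp
  | add a b _ _ ha hb => simp [ha, hb]
  | smul c a _ ha => simp [ha]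

lemma Q_apply_ne {n s : ℕ} {q : E α} (hq : q ∈ Q n s) (hs : 1 ≤ s) (v : List α)
    (hv : v.length ≠ s) : q dl v = 0 := by
  induction hq using Submodule.span_induction with
  | mem p hp =>
    obtain ⟨u, hu1, rfl⟩ := hp
    rcases le_or_gt v.length n with h | h
    · rw [X_apply n u dl v h]
      split_ifs with hc
      · have h1 := congrArg List.length hc
        simp only [List.length_take] at h1
        have hne : v.drop u.length ≠ [] := by
          intro hd
          have := congrArg List.length hd
          simp only [List.length_drop, List.length_nil] at this
          omega
        simp [dl, hne]
      · simp
    · exact X_apply_long n u dl v h (by rintro rfl; simp at hu1; omega)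
  | zero => simp
  | add a b _ _ ha hb => simp [ha, hb]
  | smul c a _ ha => simp [ha]

lemma P_split (n s : ℕ) (hs : s ≤ n) : (P n s : Submodule ℤ (E α)) = Q n s ⊔ P n (s + 1) := by
  rw [P, Q, P, ← Submodule.span_union]
  congr 1
  ext p
  constructor
  · rintro ⟨u, h1, h2, rfl⟩
    rcases eq_or_lt_of_le h1 with h | h
    · exact Or.inl ⟨u, h.symm, rfl⟩
    · exact Or.inr ⟨u, h, h2, rfl⟩
  · rintro (⟨u, h1, rfl⟩ | ⟨u, h1, h2, rfl⟩)
    · exact ⟨u, le_of_eq h1.symm, h1 ▸ hs, rfl⟩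
    · exact ⟨u, by omega, h2, rfl⟩

/-- reconstruction operator -/
noncomputable def recon (n s : ℕ) (c : V α) : E α where
  toFun f := fun l => if s ≤ l.length ∧ l.length ≤ n then c (l.take s) * f (l.drop s) else 0
  map_add' f g := by
    funext l; by_cases h : s ≤ l.length ∧ l.length ≤ n <;> simp [h, mul_add]
  map_smul' r f := by
    funext l; by_cases h : s ≤ l.length ∧ l.length ≤ n <;> simp [h, mul_left_comm]

lemma recon_X {n s : ℕ} (hs1 : 1 ≤ s) (hs2 : s ≤ n) (u : List α) (hu : u.length = s) :
    recon n s (X n u dl) = X n u := by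
  ext f l
  show (if s ≤ l.length ∧ l.length ≤ n then X n u dl (l.take s) * f (l.drop s) else 0)
      = X n u f l
  rcases le_or_gt l.length n with h | h
  · rw [X_apply n u f l h]
    by_cases hsl : s ≤ l.length
    · rw [if_pos ⟨hsl, h⟩, X_apply n u dl (l.take s) (by simp [List.length_take]; omega)]
      have e1 : (l.take s).take u.length = l.take s := by
        rw [hu, List.take_take, min_self]
      have e2 : (l.take s).drop u.length = [] := by
        rw [hu]
        apply List.drop_eq_nil_of_le
        simp [List.length_take]
      rw [e1, e2, hu]
      simp only [dl, if_pos rfl]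
      split_ifs with hc <;> simp
    · rw [if_neg (by tauto), if_neg]
      intro hc
      have := congrArg List.length hc
      simp [List.length_take] at this
      omega
  · rw [if_neg (by omega), X_apply_long n u f l h (by rintro rfl; simp at hu; omega)]

lemma recon_add (n s : ℕ) (c c' : V α) :
    recon n s (c + c') = recon n s c + recon n s c' := by
  ext f l
  show (if s ≤ l.length ∧ l.length ≤ n then (c + c') (l.take s) * f (l.drop s) else 0) = _
  by_cases h : s ≤ l.length ∧ l.length ≤ n <;>
    simp [recon, h, add_mul]

lemma recon_smul (n s : ℕ) (m : ℤ) (c : V α) :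
    recon n s (m • c) = m • recon n s c := by
  ext f l
  show (if s ≤ l.length ∧ l.length ≤ n then (m • c) (l.take s) * f (l.drop s) else 0) = _
  by_cases h : s ≤ l.length ∧ l.length ≤ n <;>
    simp [recon, h, mul_assoc]

lemma recon_zero (n s : ℕ) : recon n s (0 : V α) = 0 := by
  ext f l
  show (if s ≤ l.length ∧ l.length ≤ n then (0 : V α) (l.take s) * f (l.drop s) else 0) = 0
  by_cases h : s ≤ l.length ∧ l.length ≤ n <;> simp [h]

lemma Q_recon {n s : ℕ} (hs1 : 1 ≤ s) (hs2 : s ≤ n) {q : E α} (hq : q ∈ Q n s) :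
    recon n s (q dl) = q := by
  induction hq using Submodule.span_induction with
  | mem p hp =>
    obtain ⟨u, hu, rfl⟩ := hp
    exact recon_X hs1 hs2 u hu
  | zero => simpa using recon_zero n s
  | add a b _ _ ha hb =>
    have : (a + b) dl = a dl + b dl := rfl
    rw [this, recon_add, ha, hb]
  | smul m a _ ha =>
    have : (m • a) dl = m • (a dl) := rfl
    rw [this, recon_smul, ha]

lemma Q_eq_zero {n s : ℕ} (hs1 : 1 ≤ s) (hs2 : s ≤ n) {q : E α} (hq : q ∈ Q n s)
    (h : q dl = 0) : q = 0 := by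
  rw [← Q_recon hs1 hs2 hq, h, recon_zero]

/-- Key torsion-freeness of the associated graded: if `m • p ∈ P (s+1)` with `p ∈ P s`
then `p ∈ P (s+1)`. -/
lemma torsion_step {n s : ℕ} (hs1 : 1 ≤ s) (hs2 : s ≤ n) {p : E α} (hp : p ∈ P n s)
    {m : ℤ} (hm : m ≠ 0) (hmp : m • p ∈ P n (s + 1)) : p ∈ P n (s + 1) := by
  rw [P_split n s hs2] at hp
  obtain ⟨q, hq, r, hr, rfl⟩ := Submodule.mem_sup.mp hp
  have hq0 : q = 0 := by
    apply Q_eq_zero hs1 hs2 hq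
    funext v
    rcases eq_or_ne v.length s with hv | hv
    · have h1 : (m • (q + r)) dl v = 0 :=
        P_apply_short hmp v (by omega) (by omega)
    

      have h2 : r dl v = 0 := P_apply_short hr v (by omega) (by omega)
      have h3 : (m • (q + r)) dl v = m * ((q dl v) + (r dl v)) := by
        simp [mul_add]
      rw [h3, h2] at h1
      have : q dl v = 0 := by
        rcases mul_eq_zero.mp (by linarith [h1] : m * (q dl v) = 0) with h | h
        · exact absurd h hm
        · exact h
      simpa using this
    · exact Q_apply_ne hq hs1 v hv
  rw [hq0, zero_add]
  exact hr

/-! ### The unit group -/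

lemma xop_pow (n : ℕ) (a : α) (r : ℕ) : (xop n a) ^ r = X n (List.replicate r a) := by
  rw [X, List.map_replicate, List.prod_replicate]

lemma xop_pow_top (n : ℕ) (a : α) : (xop n a) ^ (n + 1) = 0 := by
  rw [xop_pow, X_eq_zero]
  simp

noncomputable def uA (n : ℕ) (a : α) : (E α)ˣ where
  val := 1 + xop n a
  inv := ∑ i ∈ Finset.range (n + 1), (-(xop n a)) ^ i
  val_inv := by
    have h : ((-(xop n a)) - 1) * ∑ i ∈ Finset.range (n + 1), (-(xop n a)) ^ i
        = (-(xop n a)) ^ (n + 1) - 1 := mul_geom_sum _ _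
    have h2 : (-(xop n a)) ^ (n + 1) = 0 := by
      rw [neg_pow, xop_pow_top, mul_zero]
    rw [h2, zero_sub] at h
    have : (1 + xop n a) * ∑ i ∈ Finset.range (n + 1), (-(xop n a)) ^ i
        = -(((-(xop n a)) - 1) * ∑ i ∈ Finset.range (n + 1), (-(xop n a)) ^ i) := by
      noncomm_ring
    rw [this, h, neg_neg]
  inv_val := by
    have h : (∑ i ∈ Finset.range (n + 1), (-(xop n a)) ^ i) * ((-(xop n a)) - 1)
        = (-(xop n a)) ^ (n + 1) - 1 := geom_sum_mul _ _
    have h2 : (-(xop n a)) ^ (n + 1) = 0 := by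
      rw [neg_pow, xop_pow_top, mul_zero]
    rw [h2, zero_sub] at h
    have : (∑ i ∈ Finset.range (n + 1), (-(xop n a)) ^ i) * (1 + xop n a)
        = -((∑ i ∈ Finset.range (n + 1), (-(xop n a)) ^ i) * ((-(xop n a)) - 1)) := by
      noncomm_ring
    rw [this, h, neg_neg]

lemma uA_val (n : ℕ) (a : α) : (uA n a : E α) = 1 + xop n a := rfl

lemma uA_inv_val (n : ℕ) (a : α) :
    ((uA n a)⁻¹ : (E α)ˣ) = (∑ i ∈ Finset.range (n + 1), (-(xop n a)) ^ i : E α) := rfl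

lemma uA_sub_one_mem (n : ℕ) (hn : 1 ≤ n) (a : α) : (uA n a : E α) - 1 ∈ P n 1 := by
  rw [uA_val]
  have : (1 : E α) + xop n a - 1 = X n [a] := by
    have : X n [a] = xop n a := by simp [X]
    rw [this]; noncomm_ring
  rw [this]
  exact X_mem_P n 1 [a] (by simp) (by simp [hn])

lemma uA_inv_sub_one_mem (n : ℕ) (hn : 1 ≤ n) (a : α) :
    ((uA n a)⁻¹ : (E α)ˣ) - (1 : E α) ∈ P n 1 := by
  rw [uA_inv_val, Finset.sum_range_succ']
  have h0 : (-(xop n a)) ^ 0 = (1 : E α) := pow_zero _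
  rw [h0, add_sub_cancel_right]
  apply Submodule.sum_mem
  intro i hi
  simp only [Finset.mem_range] at hi
  have : (-(xop n a)) ^ (i + 1) = ((-1 : ℤ) ^ (i + 1)) • (xop n a) ^ (i + 1) := by
    rw [neg_pow]
    simp
  rw [this, xop_pow]
  exact Submodule.smul_mem _ _ (X_mem_P n 1 _ (by simp) (by simp; omega))

/-- The subgroup of units congruent to 1 modulo the augmentation filtration. -/
noncomputable def G1 (α : Type) (n : ℕ) : Subgroup (E α)ˣ where
  carrier := { x | (x : E α) - 1 ∈ P n 1 ∧ ((x⁻¹ : (E α)ˣ) : E α) - 1 ∈ P n 1 }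
  one_mem' := by simp
  mul_mem' := by
    rintro x y ⟨hx1, hx2⟩ ⟨hy1, hy2⟩
    constructor
    · have : ((x * y : (E α)ˣ) : E α) - 1
          = ((x : E α) - 1) * ((y : E α) - 1) + ((x : E α) - 1) + ((y : E α) - 1) := by
        push_cast
        noncomm_ring
      rw [this]
      refine Submodule.add_mem _ (Submodule.add_mem _ ?_ hx1) hy1
      exact P_mono n (by omega) (P_mul n hx1 hy1)
    · have : (((x * y)⁻¹ : (E α)ˣ) : E α) - 1
          = (((y⁻¹ : (E α)ˣ) : E α) - 1) * (((x⁻¹ : (E α)ˣ) : E α) - 1)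
            + (((y⁻¹ : (E α)ˣ) : E α) - 1) + (((x⁻¹ : (E α)ˣ) : E α) - 1) := by
        rw [mul_inv_rev]
        push_cast
        noncomm_ring
      rw [this]
      refine Submodule.add_mem _ (Submodule.add_mem _ ?_ hy2) hx2
      exact P_mono n (by omega) (P_mul n hy2 hx2)
  inv_mem' := by
    rintro x ⟨hx1, hx2⟩
    exact ⟨hx2, by simpa using hx1⟩

lemma G1_mem_iff {n : ℕ} (x : (E α)ˣ) :
    x ∈ G1 α n ↔ (x : E α) - 1 ∈ P n 1 ∧ ((x⁻¹ : (E α)ˣ) : E α) - 1 ∈ P n 1 := Iff.rfl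

/-! ### Nilpotency -/

lemma sub_one_mul_closure {n m : ℕ} {x y : (E α)ˣ}
    (hx : (x : E α) - 1 ∈ P n m) (hy : (y : E α) - 1 ∈ P n m) (hm : m ≤ n + 1) :
    ((x * y : (E α)ˣ) : E α) - 1 ∈ P n m := by
  have : ((x * y : (E α)ˣ) : E α) - 1
      = ((x : E α) - 1) * ((y : E α) - 1) + ((x : E α) - 1) + ((y : E α) - 1) := by
    push_cast
    noncomm_ring
  rw [this]
  refine Submodule.add_mem _ (Submodule.add_mem _ ?_ hx) hy
  exact P_mono n (by omega) (P_mul n hx hy)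

lemma lcs_mem (n : ℕ) (k : ℕ) (z : ↥(G1 α n)) (hz : z ∈ (⊤ : Subgroup ↥(G1 α n)).lowerCentralSeries k) :
    (((z : (E α)ˣ) : E α) - 1) ∈ P n (min (k + 1) (n + 1)) := by
  induction k generalizing z with
  | zero =>
    exact P_mono n (by omega) z.2.1
  | succ k ih =>
    rw [lowerCentralSeries_succ] at hz
    induction hz using Subgroup.closure_induction with
    | mem w hw =>
      obtain ⟨y, hy, c, -, rfl⟩ := hw
      have hyP := ih y hy
      have hqP : ((c : (E α)ˣ) : E α) - 1 ∈ P n 1 := c.2.1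
      set Y : E α := ((y : (E α)ˣ) : E α)
      set C : E α := ((c : (E α)ˣ) : E α)
      set Y' : E α := (((y : (E α)ˣ)⁻¹ : (E α)ˣ) : E α)
      set C' : E α := (((c : (E α)ˣ)⁻¹ : (E α)ˣ) : E α)
      have hYY' : Y * Y' = 1 := Units.mul_inv _
      have hCC' : C * C' = 1 := Units.mul_inv _
      have hcomm : (((y * c * y⁻¹ * c⁻¹ : ↥(G1 α n)) : (E α)ˣ) : E α) = Y * C * Y' * C' := by
        push_cast
        rfl
      have hs : Y' * C' - 1 ∈ P n 1 := by
        have h1 : (((y⁻¹ * c⁻¹ : ↥(G1 α n)) : (E α)ˣ) : E α) = Y' * C' := by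
          push_cast
          rfl
        have := (y⁻¹ * c⁻¹).2.1
        rwa [h1] at this
      have e1 : C * Y * (Y' * C') = 1 := by
        rw [← mul_assoc, mul_assoc C Y Y', hYY', mul_one, hCC']
      have e2 : Y * C * Y' * C' - 1 = (Y * C - C * Y) * (Y' * C') := by
        rw [sub_mul, e1, ← mul_assoc (Y * C) Y' C']
      have e3 : Y * C - C * Y
          = (Y - 1) * (C - 1) - (C - 1) * (Y - 1) := by noncomm_ring
      have hYC : Y * C - C * Y ∈ P n (min (k + 1 + 1) (n + 1)) := by
        rw [e3]
        refine Submodule.sub_mem _ ?_ ?_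
        · exact P_mono n (by omega) (P_mul n hyP hqP)
        · exact P_mono n (by omega) (P_mul n hqP hyP)
      have e4 : (Y * C - C * Y) * (Y' * C')
          = (Y * C - C * Y) + (Y * C - C * Y) * (Y' * C' - 1) := by noncomm_ring
      rw [commutatorElement_def, hcomm, e2, e4]
      refine Submodule.add_mem _ hYC ?_
      exact P_mono n (by omega) (P_mul n hYC hs)
    | one => simp
    | mul a b _ _ ha hb =>
      have : (((a * b : ↥(G1 α n)) : (E α)ˣ)) = ((a : (E α)ˣ)) * ((b : (E α)ˣ)) := rfl
      rw [this]
      exact sub_one_mul_closure ha hb (by omega)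
    | inv a _ ha =>
      have hinv : (((a⁻¹ : ↥(G1 α n)) : (E α)ˣ) : E α) - 1 ∈ P n 1 := (a⁻¹).2.1
      have hA : ((((a⁻¹ : ↥(G1 α n)) : (E α)ˣ)) : E α) * (((a : ↥(G1 α n)) : (E α)ˣ) : E α)
          = 1 := by
        have h1 : ((a⁻¹ : ↥(G1 α n)) : (E α)ˣ) = (((a : ↥(G1 α n)) : (E α)ˣ))⁻¹ := rfl
        rw [h1]
        exact Units.inv_mul _
      set A : E α := (((a : ↥(G1 α n)) : (E α)ˣ) : E α)
      set A' : E α := (((a⁻¹ : ↥(G1 α n)) : (E α)ˣ) : E α)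
      have key : A' - 1 = -((A' - 1) * (A - 1) + (A - 1)) := by
        have h2 : -((A' - 1) * (A - 1) + (A - 1)) = A' - A' * A := by noncomm_ring
        rw [h2, hA]
      rw [key]
      refine Submodule.neg_mem _ (Submodule.add_mem _ ?_ ha)
      exact P_mono n (by omega) (P_mul n hinv ha)

lemma G1_nilpotent (n : ℕ) : Group.IsNilpotent ↥(G1 α n) := by
  rw [nilpotent_iff_lowerCentralSeries]
  refine ⟨n, ?_⟩
  rw [eq_bot_iff]
  intro z hz
  have := lcs_mem n n z hz
  rw [min_self, P_top_eq_bot] at this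
  have hz1 : ((z : (E α)ˣ) : E α) = 1 := by
    have := (Submodule.mem_bot _).mp this
    have h2 : ((z : (E α)ˣ) : E α) = ((z : (E α)ˣ) : E α) - 1 + 1 := by noncomm_ring
    rw [h2, this, zero_add]
  have : (z : (E α)ˣ) = 1 := Units.ext hz1
  simpa [Subgroup.mem_bot] using Subtype.ext this

/-! ### Torsion-freeness -/

lemma pow_sub_one_mem {n s : ℕ} (hs2 : s ≤ n) {p : E α} (hp : p ∈ P n s) (m : ℕ) :
    (1 + p) ^ m - 1 - (m : ℤ) • p ∈ P n (min (2 * s) (n + 1)) := by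
  induction m with
  | zero => simp
  | succ m ih =>
    have key : (1 + p) ^ (m + 1) - 1 - ((m + 1 : ℕ) : ℤ) • p
        = ((1 + p) ^ m - 1 - (m : ℤ) • p) * (1 + p) + (m : ℤ) • (p * p) := by
      push_cast [zsmul_eq_mul]
      noncomm_ring
    rw [key]
    refine Submodule.add_mem _ ?_ ?_
    · have h2 : ((1 + p) ^ m - 1 - (m : ℤ) • p) * (1 + p)
          = ((1 + p) ^ m - 1 - (m : ℤ) • p) + ((1 + p) ^ m - 1 - (m : ℤ) • p) * p := by
        noncomm_ring
      rw [h2]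
      refine Submodule.add_mem _ ih ?_
      exact P_mono n (by omega) (P_mul n ih hp)
    · exact Submodule.smul_mem _ _ (P_mono n (by omega) (P_mul n hp hp))

lemma G1_torsionFree (n : ℕ) (hn : 1 ≤ n) : ∀ g : ↥(G1 α n), g ≠ 1 → ¬IsOfFinOrder g := by
  intro z hz hfin
  obtain ⟨m, hm, hzm⟩ := isOfFinOrder_iff_pow_eq_one.mp hfin
  set p : E α := ((z : (E α)ˣ) : E α) - 1 with hpdef
  have hp1 : p ∈ P n 1 := z.2.1
  have hpne : p ≠ 0 := by
    intro h0
    apply hz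
    have : ((z : (E α)ˣ) : E α) = 1 := by
      have : ((z : (E α)ˣ) : E α) - 1 = 0 := h0
      have h2 : ((z : (E α)ˣ) : E α) = ((z : (E α)ˣ) : E α) - 1 + 1 := by noncomm_ring
      rw [h2, this, zero_add]
    exact Subtype.ext (Units.ext this)
  set s : ℕ := Nat.findGreatest (fun k => p ∈ P n k) n with hsdef
  have hs1 : 1 ≤ s := Nat.le_findGreatest (P := fun k => p ∈ P n k) hn hp1
  have hsle : s ≤ n := Nat.findGreatest_le (P := fun k => p ∈ P n k) n
  have hps : p ∈ P n s := Nat.findGreatest_spec (P := fun k => p ∈ P n k) hn hp1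
  have hnot : p ∉ P n (s + 1) := by
    rcases le_or_gt (s + 1) n with h | h
    · exact Nat.findGreatest_is_greatest (P := fun k => p ∈ P n k) (by omega) h
    · have : s = n := by omega
      rw [this, P_top_eq_bot]
      intro hb
      exact hpne ((Submodule.mem_bot _).mp hb)
  -- from z ^ m = 1 we get (1 + p) ^ m = 1
  have hzm' : ((1 : E α) + p) ^ m = 1 := by
    have h1 : (((z ^ m : ↥(G1 α n)) : (E α)ˣ) : E α) = (((z : (E α)ˣ)) : E α) ^ m := by
      push_cast
      rfl
    have h2 : ((z : (E α)ˣ) : E α) = 1 + p := by rw [hpdef]; noncomm_ring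
    rw [hzm] at h1
    rw [← h2]
    exact h1.symm
  have hmem : (m : ℤ) • p ∈ P n (s + 1) := by
    have h1 := pow_sub_one_mem hsle hps m
    rw [hzm'] at h1
    have h2 : (1 : E α) - 1 - (m : ℤ) • p = -((m : ℤ) • p) := by noncomm_ring
    rw [h2] at h1
    have := Submodule.neg_mem _ h1
    rw [neg_neg] at this
    exact P_mono n (by omega) this
  have : p ∈ P n (s + 1) :=
    torsion_step hs1 hsle hps (by positivity : (m : ℤ) ≠ 0) hmem
  exact hnot this

/-! ### The word operators -/

/-- The operator associated to a letter of a word in the free group. -/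
noncomputable def lop (n : ℕ) (p : α × Bool) : E α :=
  cond p.2 ((uA n p.1 : (E α)ˣ) : E α) (((uA n p.1)⁻¹ : (E α)ˣ) : E α)

/-- The operator associated to a word in the free group. -/
noncomputable def T (n : ℕ) (w : List (α × Bool)) : E α := (w.map (lop n)).prod

lemma T_nil (n : ℕ) : T n ([] : List (α × Bool)) = 1 := rfl

lemma T_cons (n : ℕ) (p : α × Bool) (w : List (α × Bool)) :
    T n (p :: w) = lop n p * T n w := by simp [T]

lemma T_append (n : ℕ) (w₁ w₂ : List (α × Bool)) :
    T n (w₁ ++ w₂) = T n w₁ * T n w₂ := by simp [T]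

lemma T_replicate (n : ℕ) (r : ℕ) (p : α × Bool) :
    T n (List.replicate r p) = (lop n p) ^ r := by
  simp [T, List.map_replicate, List.prod_replicate]

lemma uA_apply (n : ℕ) (a : α) (f : V α) (l : List α) (hl : l.length ≤ n) :
    ((uA n a : (E α)ˣ) : E α) f l
      = f l + if l.head? = some a then f l.tail else 0 := by
  rw [uA_val]
  have : ((1 : E α) + xop n a) f l = f l + xop n a f l := rfl
  rw [this, xop_apply]
  by_cases h : l.head? = some a <;> simp [h, hl]

lemma uAinv_eq (n : ℕ) (a : α) :
    (((uA n a)⁻¹ : (E α)ˣ) : E α) = 1 - xop n a * (((uA n a)⁻¹ : (E α)ˣ) : E α) := by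
  have h : ((uA n a : (E α)ˣ) : E α) * (((uA n a)⁻¹ : (E α)ˣ) : E α) = 1 := Units.mul_inv _
  rw [uA_val] at h
  have h2 : (((uA n a)⁻¹ : (E α)ˣ) : E α) + xop n a * (((uA n a)⁻¹ : (E α)ˣ) : E α)
      = ((1 : E α) + xop n a) * (((uA n a)⁻¹ : (E α)ˣ) : E α) := by noncomm_ring
  rw [h] at h2
  rw [← h2]
  noncomm_ring

lemma uAinv_apply (n : ℕ) (a : α) (f : V α) (l : List α) (hl : l.length ≤ n) :
    (((uA n a)⁻¹ : (E α)ˣ) : E α) f l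
      = f l - if l.head? = some a then (((uA n a)⁻¹ : (E α)ˣ) : E α) f l.tail else 0 := by
  conv_lhs => rw [uAinv_eq]
  have : ((1 : E α) - xop n a * (((uA n a)⁻¹ : (E α)ˣ) : E α)) f l
      = f l - xop n a ((((uA n a)⁻¹ : (E α)ˣ) : E α) f) l := rfl
  rw [this, xop_apply]
  by_cases h : l.head? = some a <;> simp [h, hl]

/-! ### Subordinate words -/

/-- `Sub w M` means the word `M` (in letters) can appear as a monomial in the
Magnus expansion of the word `w`. -/
inductive Sub : List (α × Bool) → List α → Prop
  | nil : Sub [] []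
  | pos0 {b : α} {w : List (α × Bool)} {M : List α} :
      Sub w M → Sub ((b, true) :: w) M
  | pos1 {b : α} {w : List (α × Bool)} {M : List α} :
      Sub w M → Sub ((b, true) :: w) (b :: M)
  | neg0 {b : α} {w : List (α × Bool)} {M : List α} :
      Sub w M → Sub ((b, false) :: w) M
  | negS {b : α} {w : List (α × Bool)} {M : List α} :
      Sub ((b, false) :: w) M → Sub ((b, false) :: w) (b :: M)

lemma T_apply_eq_zero (n : ℕ) : ∀ (w : List (α × Bool)) (M : List α),
    ¬ Sub w M → M.length ≤ n → T n w dl M = 0 := by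
  intro w
  induction w with
  | nil =>
    intro M hM _
    have hMne : M ≠ [] := by rintro rfl; exact hM Sub.nil
    simp [T_nil, dl, hMne]
  | cons p w ih =>
    obtain ⟨b, ε⟩ := p
    cases ε
    · -- negative letter; inner induction on M
      intro M
      induction M with
      | nil =>
        intro hM _
        rw [T_cons]
        have hT : (lop n (b, false) * T n w) dl ([] : List α)
            = (((uA n b)⁻¹ : (E α)ˣ) : E α) (T n w dl) [] := rfl
        rw [hT, uAinv_apply n b _ _ (by simp)]
        have h1 : T n w dl [] = 0 := ih [] (fun hsub => hM (Sub.neg0 hsub)) (by simp)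
        simp [h1]
      | cons c M' ihM =>
        intro hM hlen
        rw [T_cons]
        have hT : (lop n (b, false) * T n w) dl (c :: M')
            = (((uA n b)⁻¹ : (E α)ˣ) : E α) (T n w dl) (c :: M') := rfl
        rw [hT, uAinv_apply n b _ _ hlen]
        have h1 : T n w dl (c :: M') = 0 := ih _ (fun hsub => hM (Sub.neg0 hsub)) hlen
        rw [h1]
        by_cases hc : c = b
        · subst hc
          have h2 : (((uA n c)⁻¹ : (E α)ˣ) : E α) (T n w dl) M' = 0 := by
            have h3 := ihM (fun hsub => hM (Sub.negS hsub)) (by simp at hlen; omega)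
            rw [T_cons] at h3
            exact h3
          simp [h2]
        · simp [hc]
    · -- positive letter
      intro M hM hlen
      rw [T_cons]
      have hT : (lop n (b, true) * T n w) dl M
          = ((uA n b : (E α)ˣ) : E α) (T n w dl) M := rfl
      rw [hT, uA_apply n b _ _ hlen]
      have h1 : T n w dl M = 0 := ih M (fun hsub => hM (Sub.pos0 hsub)) hlen
      rw [h1]
      by_cases hc : M.head? = some b
      · obtain ⟨M', rfl⟩ : ∃ M', M = b :: M' := by
          cases M with
          | nil => simp at hc
          | cons c M' => simp at hc; subst hc; exact ⟨M', rfl⟩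
        have h2 : T n w dl M' = 0 :=
          ih M' (fun hsub => hM (Sub.pos1 hsub)) (by simp at hlen; omega)
        simp [h1, h2]
      · simp [hc]

/-! ### Run counts -/

/-- number of maximal constant runs in a list -/
noncomputable def rc {β : Type} : List β → ℕ
  | [] => 0
  | a :: l => rc l + (if l.head? = some a then 0 else 1)

@[simp] lemma rc_nil {β : Type} : rc ([] : List β) = 0 := rfl

lemma rc_cons {β : Type} (a : β) (l : List β) :
    rc (a :: l) = rc l + (if l.head? = some a then 0 else 1) := rfl

lemma rc_pos {β : Type} {l : List β} (h : l ≠ []) : 1 ≤ rc l := by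
  induction l with
  | nil => simp at h
  | cons a l ih =>
    rw [rc_cons]
    rcases eq_or_ne l [] with rfl | hne
    · simp
    · have := ih hne
      omega

lemma rc_eq_zero {β : Type} {l : List β} (h : rc l = 0) : l = [] := by
  by_contra hne
  have := rc_pos hne
  omega

lemma sub_rc {w : List (α × Bool)} {N : List α} (h : Sub w N) :
    rc N ≤ rc w ∧ (rc N = rc w → ∀ a, N.head? = some a → ∃ s, w.head? = some (a, s)) := by
  induction h with
  | nil => simp
  | @pos0 b w M hsub ih =>
    rw [rc_cons (b, true) w]
    by_cases hw : w.head? = some (b, true)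
    · simp only [hw, if_pos rfl, add_zero]
      refine ⟨ih.1, fun heq a ha => ?_⟩
      obtain ⟨s, hs⟩ := ih.2 heq a ha
      rw [hw] at hs
      have : a = b := by
        have h9 := congrArg (fun o : Option (α × Bool) => o.map Prod.fst) hs
        simp at h9
        first | exact h9 | exact h9.symm
      subst this
      exact ⟨true, rfl⟩
    · rw [if_neg hw]
      exact ⟨by omega, fun heq => by omega⟩
  | @pos1 b w M hsub ih =>
    have hbound : rc (b :: M) ≤ rc ((b, true) :: w) := by
      rw [rc_cons b M, rc_cons (b, true) w]
      by_cases hM : M.head? = some b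
      · by_cases hw : w.head? = some (b, true) <;> simp [hM, hw] <;> omega
      · by_cases hw : w.head? = some (b, true)
        · -- need rc M < rc w
          rcases lt_or_eq_of_le ih.1 with hlt | heq
          · simp [hM, hw]; omega
          · exfalso
            rcases hM2 : M.head? with _ | a
            · have hM0 : M = [] := List.head?_eq_none_iff.mp hM2
              subst hM0
              simp at heq
              have : w = [] := rc_eq_zero heq.symm
              subst this
              simp at hw
            · obtain ⟨s, hs⟩ := ih.2 heq a hM2
              rw [hw] at hs
              have : a = b := by
                have h9 := congrArg (fun o : Option (α × Bool) => o.map Prod.fst) hs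
                simp at h9
                first | exact h9 | exact h9.symm
              subst this
              exact hM hM2
        · simp [hM, hw]; omega
    refine ⟨hbound, fun _ a ha => ?_⟩
    simp only [List.head?_cons, Option.some.injEq] at ha
    subst ha
    exact ⟨true, rfl⟩
  | @neg0 b w M hsub ih =>
    rw [rc_cons (b, false) w]
    by_cases hw : w.head? = some (b, false)
    · simp only [hw, if_pos rfl, add_zero]
      refine ⟨ih.1, fun heq a ha => ?_⟩
      obtain ⟨s, hs⟩ := ih.2 heq a ha
      rw [hw] at hs
      have : a = b := by
        have h9 := congrArg (fun o : Option (α × Bool) => o.map Prod.fst) hs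
        simp at h9
        first | exact h9 | exact h9.symm
      subst this
      exact ⟨false, rfl⟩
    · rw [if_neg hw]
      exact ⟨by omega, fun heq => by omega⟩
  | @negS b w M hsub ih =>
    have hbound : rc (b :: M) ≤ rc ((b, false) :: w) := by
      rw [rc_cons b M]
      by_cases hM : M.head? = some b
      · simp [hM]; exact ih.1
      · rcases lt_or_eq_of_le ih.1 with hlt | heq
        · simp [hM]; omega
        · exfalso
          rcases hM2 : M.head? with _ | a
          · have hM0 : M = [] := List.head?_eq_none_iff.mp hM2
            subst hM0
            simp at heq
            have : (b, false) :: w = [] := rc_eq_zero heq.symm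
            simp at this
          · obtain ⟨s, hs⟩ := ih.2 heq a hM2
            simp only [List.head?_cons, Option.some.injEq] at hs
            have h9 : b = a := congrArg Prod.fst hs
            subst h9
            exact hM hM2
    refine ⟨hbound, fun _ a ha => ?_⟩
    simp only [List.head?_cons, Option.some.injEq] at ha
    subst ha
    exact ⟨false, rfl⟩

/-! ### Reduced words -/

/-- A word is reduced: no adjacent cancelling pair. -/
def IsRed (w : List (α × Bool)) : Prop :=
  List.IsChain (fun p q => ¬(p.1 = q.1 ∧ p.2 = !q.2)) w

lemma isRed_of_no_decomp {L : List (α × Bool)}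
    (h : ∀ (L₂ : List (α × Bool)) (x : α) (b : Bool) (L₃ : List (α × Bool)),
      L ≠ L₂ ++ (x, b) :: (x, !b) :: L₃) : IsRed L := by
  induction L with
  | nil => constructor
  | cons p L ih =>
    cases L with
    | nil => constructor <;> simp
    | cons q t =>
      rw [IsRed, List.isChain_cons_cons]
      constructor
      · rintro ⟨h1, h2⟩
        refine h [] p.1 p.2 t ?_
        have hq : q = (p.1, !p.2) := by
          obtain ⟨a, s⟩ := q
          obtain ⟨a', s'⟩ := p
          simp_all
        rw [hq]
        simp
      · apply ih
        intro L₂ x b L₃ hL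
        exact h (p :: L₂) x b L₃ (by rw [hL]; rfl)

lemma isRed_toWord [DecidableEq α] (g : FreeGroup α) : IsRed g.toWord := by
  apply isRed_of_no_decomp
  intro L₂ x b L₃ hL
  exact FreeGroup.reduce.not (L₁ := g.toWord) (by rw [FreeGroup.reduce_toWord, hL])

lemma isRed_suffix {w w' : List (α × Bool)} (h : IsRed w) (hs : w' <:+ w) : IsRed w' :=
  List.IsChain.suffix h hs

lemma rc_map_fst {w : List (α × Bool)} (h : IsRed w) : rc (w.map Prod.fst) = rc w := by
  induction w with
  | nil => simp
  | cons p w ih =>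
    have htail : IsRed w := List.IsChain.suffix h (List.suffix_cons p w)
    rw [List.map_cons, rc_cons, rc_cons p w, ih htail]
    congr 1
    have hhead : (List.map Prod.fst w).head? = some p.1 ↔ w.head? = some p := by
      cases w with
      | nil => simp
      | cons q t =>
        simp only [List.map_cons, List.head?_cons, Option.some.injEq]
        constructor
        · intro hq
          have hR : ¬(p.1 = q.1 ∧ p.2 = !q.2) := (List.isChain_cons_cons.mp h).1
          obtain ⟨a, s⟩ := q
          obtain ⟨a', s'⟩ := p
          simp at hq
          subst hq
          simp at hR
          cases s <;> cases s' <;> simp_all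
        · intro hq; rw [hq]
    by_cases hc : w.head? = some p
    · rw [if_pos (hhead.mpr hc), if_pos hc]
    · rw [if_neg (fun hx => hc (hhead.mp hx)), if_neg hc]

lemma rc_replicate_append {b : α} {M : List α} (hhead : M.head? ≠ some b) :
    ∀ t, 1 ≤ t → rc (List.replicate t b ++ M) = rc M + 1 := by
  intro t
  induction t with
  | zero => omega
  | succ t ih =>
    intro _
    rcases Nat.eq_zero_or_pos t with rfl | ht
    · simp [rc_cons, hhead]
    · have hrep : List.replicate (t + 1) b ++ M = b :: (List.replicate t b ++ M) := by
        rw [List.replicate_succ]; rfl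
      have hh : (List.replicate t b ++ M).head? = some b := by
        cases t with
        | zero => omega
        | succ t => rw [List.replicate_succ]; rfl
      rw [hrep, rc_cons, hh, if_pos rfl, ih ht, add_zero]

lemma not_sub_shift {w : List (α × Bool)} (hred : IsRed w) {b : α}
    (hb : ∀ s, w.head? ≠ some (b, s)) {t : ℕ} (ht : 1 ≤ t) :
    ¬ Sub w (List.replicate t b ++ w.map Prod.fst) := by
  intro h
  have h1 := (sub_rc h).1
  have hhead : (w.map Prod.fst).head? ≠ some b := by
    cases w with
    | nil => simp
    | cons q w' =>
      simp only [List.map_cons, List.head?_cons, Option.some.injEq]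
      intro hq
      have hqb : q.1 = b := Option.some_injective _ hq
      apply hb q.2
      show some q = some (b, q.2)
      rw [← hqb]
  rw [rc_replicate_append hhead t ht, rc_map_fst hred] at h1
  omega

/-! ### Coefficients -/

/-- Coefficients of `(1+x)^{-r}` (truncated). -/
def D : ℕ → ℕ → ℤ
  | 0, 0 => 1
  | 0, _ + 1 => 0
  | r + 1, 0 => D r 0
  | r + 1, t + 1 => D r (t + 1) - D (r + 1) t

lemma D_sign {r : ℕ} (hr : 1 ≤ r) : ∀ t, 1 ≤ (-1 : ℤ) ^ t * D r t := by
  induction r with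
  | zero => omega
  | succ r ih =>
    rcases Nat.eq_zero_or_pos r with rfl | hr'
    · -- D 1 t = (-1)^t
      intro t
      induction t with
      | zero => simp [D]
      | succ t iht =>
        have : D 1 (t + 1) = D 0 (t + 1) - D 1 t := by simp [D]
        rw [this]
        show 1 ≤ (-1 : ℤ) ^ (t + 1) * (D 0 (t + 1) - D 1 t)
        have h0 : D 0 (t + 1) = 0 := by simp [D]
        rw [h0, zero_sub, pow_succ]
        have := iht
        nlinarith [iht]
    · intro t
      induction t with
      | zero =>
        have : D (r + 1) 0 = D r 0 := by simp [D]
        rw [this]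
        simpa using ih hr' 0
      | succ t iht =>
        have hD : D (r + 1) (t + 1) = D r (t + 1) - D (r + 1) t := by simp [D]
        rw [hD]
        have h1 := ih hr' (t + 1)
        have h2 := iht
        rw [pow_succ] at *
        nlinarith [h1, h2]

lemma D_ne_zero {r : ℕ} (hr : 1 ≤ r) : D r r ≠ 0 := by
  have := D_sign hr r
  intro h
  rw [h, mul_zero] at this
  omega

/-! ### Syllable evaluation -/

section Spec

variable (n : ℕ) (b : α) (M' : List α) (f : V α)

lemma spec_pos (hM' : M'.head? ≠ some b)
    (hf : ∀ t, 1 ≤ t → t + M'.length ≤ n → f (List.replicate t b ++ M') = 0) :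
    ∀ r t, t + M'.length ≤ n →
      (((uA n b : (E α)ˣ) : E α) ^ r) f (List.replicate t b ++ M')
        = (r.choose t : ℤ) * f M' := by
  intro r
  induction r with
  | zero =>
    intro t hlen
    rcases Nat.eq_zero_or_pos t with rfl | ht
    · simp
    · have h1 : f (List.replicate t b ++ M') = 0 := hf t ht hlen
      have h2 : (1 : E α) f (List.replicate t b ++ M') = f (List.replicate t b ++ M') := rfl
      rw [pow_zero, h2, h1, Nat.choose_eq_zero_of_lt (by omega)]
      simp
  | succ r ih =>
    intro t hlen
    rw [pow_succ']
    have h2 : (((uA n b : (E α)ˣ) : E α) * ((uA n b : (E α)ˣ) : E α) ^ r) f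
          (List.replicate t b ++ M')
        = ((uA n b : (E α)ˣ) : E α) ((((uA n b : (E α)ˣ) : E α) ^ r) f)
          (List.replicate t b ++ M') := rfl
    rw [h2, uA_apply n b _ _ (by simp; omega)]
    cases t with
    | zero =>
      simp only [List.replicate_zero, List.nil_append]
      rw [if_neg hM', add_zero]
      have h3 := ih 0 (by omega)
      simp only [List.replicate_zero, List.nil_append] at h3
      rw [h3]
      simp
    | succ t =>
      have hh : (List.replicate (t + 1) b ++ M').head? = some b := by
        rw [List.replicate_succ]; rfl
      have htl : (List.replicate (t + 1) b ++ M').tail = List.replicate t b ++ M' := by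
        rw [List.replicate_succ]; rfl
      rw [if_pos hh, htl, ih (t + 1) (by omega), ih t (by omega)]
      rw [Nat.choose_succ_succ]
      push_cast
      ring

lemma spec_neg (hM' : M'.head? ≠ some b)
    (hf : ∀ t, 1 ≤ t → t + M'.length ≤ n → f (List.replicate t b ++ M') = 0) :
    ∀ r t, t + M'.length ≤ n →
      ((((uA n b)⁻¹ : (E α)ˣ) : E α) ^ r) f (List.replicate t b ++ M')
        = D r t * f M' := by
  intro r
  induction r with
  | zero =>
    intro t hlen
    rcases Nat.eq_zero_or_pos t with rfl | ht
    · simp [D]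
    · have h1 : f (List.replicate t b ++ M') = 0 := hf t ht hlen
      have h2 : (1 : E α) f (List.replicate t b ++ M') = f (List.replicate t b ++ M') := rfl
      rw [pow_zero, h2, h1]
      cases t with
      | zero => omega
      | succ t =>
        have : D 0 (t + 1) = 0 := by simp [D]
        rw [this]
        simp
  | succ r ih =>
    intro t
    induction t with
    | zero =>
      intro hlen
      rw [pow_succ']
      have h2 : ((((uA n b)⁻¹ : (E α)ˣ) : E α) * (((uA n b)⁻¹ : (E α)ˣ) : E α) ^ r) f
            (List.replicate 0 b ++ M')
          = (((uA n b)⁻¹ : (E α)ˣ) : E α) (((((uA n b)⁻¹ : (E α)ˣ) : E α) ^ r) f)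
            (List.replicate 0 b ++ M') := rfl
      rw [h2]
      simp only [List.replicate_zero, List.nil_append]
      rw [uAinv_apply n b _ _ (by omega), if_neg hM', sub_zero]
      have h3 := ih 0 (by omega)
      simp only [List.replicate_zero, List.nil_append] at h3
      rw [h3]
      have : D (r + 1) 0 = D r 0 := by simp [D]
      rw [this]
    | succ t iht =>
      intro hlen
      rw [pow_succ']
      have h2 : ((((uA n b)⁻¹ : (E α)ˣ) : E α) * (((uA n b)⁻¹ : (E α)ˣ) : E α) ^ r) f
            (List.replicate (t + 1) b ++ M')
          = (((uA n b)⁻¹ : (E α)ˣ) : E α) (((((uA n b)⁻¹ : (E α)ˣ) : E α) ^ r) f)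
            (List.replicate (t + 1) b ++ M') := rfl
      have hh : (List.replicate (t + 1) b ++ M').head? = some b := by
        rw [List.replicate_succ]; rfl
      have htl : (List.replicate (t + 1) b ++ M').tail = List.replicate t b ++ M' := by
        rw [List.replicate_succ]; rfl
      rw [h2, uAinv_apply n b _ _ (by simp; omega), if_pos hh, htl]
      have e1 := ih (t + 1) (by omega)
      have e2 : (((uA n b)⁻¹ : (E α)ˣ) : E α) (((((uA n b)⁻¹ : (E α)ˣ) : E α) ^ r) f)
            (List.replicate t b ++ M')
          = ((((uA n b)⁻¹ : (E α)ˣ) : E α) ^ (r + 1)) f (List.replicate t b ++ M') := by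
        rw [pow_succ']
        rfl
      rw [e1, e2, iht (by omega)]
      have hD : D (r + 1) (t + 1) = D r (t + 1) - D (r + 1) t := by simp [D]
      rw [hD]
      ring

end Spec

/-! ### The key non-vanishing lemma -/

lemma getLast?_replicate_succ {β : Type} (a : β) : ∀ (m : ℕ),
    (List.replicate (m + 1) a).getLast? = some a := by
  intro m
  induction m with
  | zero => rfl
  | succ m ih =>
    rw [List.replicate_succ, List.replicate_succ, List.getLast?_cons_cons,
      ← List.replicate_succ]
    exact ih

lemma run_split : ∀ (w : List (α × Bool)), w ≠ [] →
    ∃ (p : α × Bool) (r : ℕ) (w' : List (α × Bool)),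
      1 ≤ r ∧ w = List.replicate r p ++ w' ∧ w'.head? ≠ some p := by
  intro w
  induction w with
  | nil => intro h; exact absurd rfl h
  | cons p w ih =>
    intro _
    by_cases h : w.head? = some p
    · have hw : w ≠ [] := by rintro rfl; simp at h
      obtain ⟨p', r, w', hr, hdecomp, hhead⟩ := ih hw
      have hp' : p' = p := by
        have : w.head? = some p' := by
          rw [hdecomp]
          cases r with
          | zero => omega
          | succ r => rw [List.replicate_succ]; rfl
        rw [this] at h
        exact Option.some_injective _ h
      refine ⟨p', r + 1, w', by omega, ?_, by rw [hp']; exact hp' ▸ hhead⟩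
      rw [List.replicate_succ, List.cons_append, ← hdecomp, hp']
    · exact ⟨p, 1, w, le_refl 1, by simp, h⟩

lemma key_ne_zero (n : ℕ) : ∀ (k : ℕ) (w : List (α × Bool)), w.length ≤ k →
    IsRed w → w.length ≤ n → T n w dl (w.map Prod.fst) ≠ 0 := by
  intro k
  induction k with
  | zero =>
    intro w hk _ _
    have : w = [] := List.eq_nil_of_length_eq_zero (by omega)
    subst this
    simp [T_nil, dl]
  | succ k ih =>
    intro w hk hred hn
    rcases eq_or_ne w [] with rfl | hne
    · simp [T_nil, dl]
    obtain ⟨⟨b, ε⟩, r, w', hr, hdecomp, hhead⟩ := run_split w hne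
    have hlen : w.length = r + w'.length := by
      rw [hdecomp]; simp
    set M' : List α := w'.map Prod.fst with hM'def
    have hmap : w.map Prod.fst = List.replicate r b ++ M' := by
      rw [hdecomp, List.map_append, List.map_replicate]
    have hred' : IsRed w' := isRed_suffix hred ⟨List.replicate r (b, ε), hdecomp.symm⟩
    -- the head letter of w' is not b
    have hbhead : ∀ s, w'.head? ≠ some (b, s) := by
      intro s hs
      have hchain := hdecomp ▸ hred
      rw [IsRed, List.isChain_append] at hchain
      have hlast : (List.replicate r (b, ε)).getLast? = some (b, ε) := by
        cases r with
        | zero => omega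
        | succ r => exact getLast?_replicate_succ (b, ε) r
      have := hchain.2.2 (b, ε) hlast (b, s) hs
      simp at this
      subst this
      exact hhead hs
    have hM'head : M'.head? ≠ some b := by
      intro hM
      cases w' with
      | nil => simp [hM'def] at hM
      | cons q t =>
        have : q.1 = b := by
          have : (List.map Prod.fst (q :: t)).head? = some q.1 := rfl
          rw [hM'def] at hM
          rw [this] at hM
          exact Option.some_injective _ hM
        exact hbhead q.2 (by rw [show (q :: t).head? = some q from rfl, ← this])
    -- the vanishing hypothesis for SPEC
    have hf : ∀ t, 1 ≤ t → t + M'.length ≤ n →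
        T n w' dl (List.replicate t b ++ M') = 0 := by
      intro t ht hlen'
      apply T_apply_eq_zero n w'
      · exact not_sub_shift hred' hbhead ht
      · simp [hM'def] at hlen' ⊢; omega
    have hw'k : w'.length ≤ k := by omega
    have hw'n : w'.length ≤ n := by omega
    have hihne : T n w' dl M' ≠ 0 := ih w' hw'k hred' hw'n
    have hsplit : T n w = T n (List.replicate r (b, ε)) * T n w' := by
      rw [hdecomp, T_append]
    have happly : T n w dl (w.map Prod.fst)
        = ((lop n (b, ε)) ^ r) (T n w' dl) (List.replicate r b ++ M') := by
      rw [hsplit, T_replicate, hmap]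
      rfl
    have hM'len : r + M'.length ≤ n := by
      have : M'.length = w'.length := by simp [hM'def]
      omega
    cases ε
    · -- negative
      have hspec := spec_neg n b M' (T n w' dl) hM'head hf r r hM'len
      have hlop : lop n (b, false) = (((uA n b)⁻¹ : (E α)ˣ) : E α) := rfl
      rw [happly, hlop, hspec]
      exact mul_ne_zero (D_ne_zero hr) hihne
    · -- positive
      have hspec := spec_pos n b M' (T n w' dl) hM'head hf r r hM'len
      have hlop : lop n (b, true) = ((uA n b : (E α)ˣ) : E α) := rfl
      rw [happly, hlop, hspec, Nat.choose_self]
      simpa using hihne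

end Magnus

open Magnus in
/-- Every free group is residually torsion-free nilpotent. -/
theorem stmt_13 (α : Type) :
    ∀ g : FreeGroup α, g ≠ 1 →
      ∃ (N : Type) (_ : Group N) (σ : FreeGroup α →* N),
        Group.IsNilpotent N ∧ (∀ g : N, g ≠ 1 → ¬IsOfFinOrder g) ∧
          Function.Surjective σ ∧ σ g ≠ 1 := by
  classical
  intro g hg
  set n : ℕ := g.toWord.length with hndef
  have htw : g.toWord ≠ [] := fun h => hg (FreeGroup.toWord_eq_nil_iff.mp h)
  have hn : 1 ≤ n := by
    rw [hndef]
    exact List.length_pos_iff.mpr htw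
  set F : α → ↥(G1 α n) :=
    fun a => ⟨uA n a, uA_sub_one_mem n hn a, uA_inv_sub_one_mem n hn a⟩ with hFdef
  set σ₀ : FreeGroup α →* ↥(G1 α n) := FreeGroup.lift F with hσdef
  refine ⟨↥σ₀.range, inferInstance, σ₀.rangeRestrict, ?_, ?_, ?_, ?_⟩
  · haveI := G1_nilpotent (α := α) n
    exact Subgroup.isNilpotent _
  · intro z hz hfin
    obtain ⟨m, hm, hzm⟩ := isOfFinOrder_iff_pow_eq_one.mp hfin
    exact G1_torsionFree n hn z.1 (fun h => hz (Subtype.ext h))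
      (isOfFinOrder_iff_pow_eq_one.mpr ⟨m, hm, congrArg Subtype.val hzm⟩)
  · exact σ₀.rangeRestrict_surjective
  · intro h1
    have hσg : σ₀ g = 1 := by
      have := congrArg (Subtype.val) h1
      exact this
    -- compute the image of `g` in `E α`
    set φ : ↥(G1 α n) →* E α := (Units.coeHom (E α)).comp (G1 α n).subtype with hφdef
    have hφT : φ (σ₀ g) = T n g.toWord := by
      conv_lhs => rw [← FreeGroup.mk_toWord (x := g)]
      rw [hσdef, FreeGroup.lift_mk, map_list_prod φ, T, List.map_map]
      congr 1
      apply List.map_congr_left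
      rintro ⟨a, ε⟩ _
      cases ε <;> rfl
    rw [hσg, map_one] at hφT
    have hkey := key_ne_zero n n g.toWord (le_refl n) (isRed_toWord g) (le_refl n)
    rw [← hφT] at hkey
    apply hkey
    have hmapne : g.toWord.map Prod.fst ≠ [] := by
      simpa using htw
    show (1 : E α) dl (g.toWord.map Prod.fst) = 0
    simp [dl, hmapne]
end

section
/- Let N be a nilpotent group and y ∈ N. If y is conjugate in N to y⁻¹, then y² lies in γ₂(N), y⁴ in γ₃(N), and in general y^{2^i} ∈ γ_{i+1}(N); consequently, if N has nilpotency class c, then y^{2^c} = 1. -/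
open scoped commutatorElement

/-- In a nilpotent group `N` of class `c` (i.e. `γ_{c+1}(N) = 1`, where
`lowerCentralSeries N i` is `γ_{i+1}(N)`), if `y` is conjugate to `y⁻¹`, then
`y ^ (2 ^ i) ∈ γ_{i+1}(N)` for all `i`, and consequently `y ^ (2 ^ c) = 1`. -/
theorem stmt_15 {N : Type*} [Group N] (y : N) (hconj : ∃ x : N, x⁻¹ * y * x = y⁻¹)
    (c : ℕ) (hc : (⊤ : Subgroup N).lowerCentralSeries c = ⊥) :
    (∀ i : ℕ, y ^ (2 ^ i) ∈ (⊤ : Subgroup N).lowerCentralSeries i) ∧ y ^ (2 ^ c) = 1 := by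
  obtain ⟨x, hx⟩ := hconj
  have hconj' : ∀ n : ℕ, x⁻¹ * y ^ n * x = (y ^ n)⁻¹ := by
    intro n
    induction n with
    | zero => simp
    | succ n ih =>
      calc x⁻¹ * y ^ (n + 1) * x = (x⁻¹ * y ^ n * x) * (x⁻¹ * y * x) := by
            rw [pow_succ]; group
        _ = (y ^ n)⁻¹ * y⁻¹ := by rw [ih, hx]
        _ = (y ^ (n + 1))⁻¹ := by rw [pow_succ', mul_inv_rev]
  have key : ∀ i : ℕ, y ^ (2 ^ i) ∈ (⊤ : Subgroup N).lowerCentralSeries i := by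
    intro i
    induction i with
    | zero => simp [Subgroup.lowerCentralSeries]
    | succ i ih =>
      have heq : y ^ (2 ^ (i + 1)) = ⁅y ^ (2 ^ i), x⁻¹⁆ := by
        have h2 : y ^ (2 ^ (i + 1)) = y ^ (2 ^ i) * y ^ (2 ^ i) := by
          rw [← pow_add, pow_succ, mul_two]
        rw [h2, show ⁅y ^ (2 ^ i), x⁻¹⁆
            = y ^ (2 ^ i) * (x⁻¹ * (y ^ (2 ^ i))⁻¹ * x) from by group]
        congr 1
        rw [show x⁻¹ * (y ^ (2 ^ i))⁻¹ * x = (x⁻¹ * y ^ (2 ^ i) * x)⁻¹ from by group,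
          hconj' (2 ^ i), inv_inv]
      rw [heq, Subgroup.lowerCentralSeries_succ]
      exact Subgroup.commutator_mem_commutator ih (Subgroup.mem_top _)
  refine ⟨key, ?_⟩
  have := key c
  rw [hc] at this
  simpa using this
end
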